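/- Let (T, F) be a torsion pair in Mod-R. (1) If T₀ and T₀' are both torsion, almost torsion-free modules, then every nonzero homomorphism g : T₀ → T₀' is an isomorphism. (2) If F₀ and F₀' are both torsion-free, almost torsion modules, then every nonzero homomorphism f : F₀ → F₀' is an isomorphism. In particular, every torsion almost torsion-free module and every torsion-free almost torsion module is a brick, i.e., its endomorphism ring is a division ring. -/

import Mathlib

open CategoryTheory Limits

universe u

namespace Paper

variable {R : Type u} [Ring R]

/-- A torsion pair `(T, F)` in the category of `R`-modules: Hom(T, F) = 0 and every
module fits in a short exact sequence with torsion kernel and torsion-free cokernel. -/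
structure TorsionPair (R : Type u) [Ring R] where
  tors : Set (ModuleCat.{u} R)
  free : Set (ModuleCat.{u} R)
  isoClosed_tors : ∀ {X Y : ModuleCat.{u} R}, (X ≅ Y) → X ∈ tors → Y ∈ tors
  isoClosed_free : ∀ {X Y : ModuleCat.{u} R}, (X ≅ Y) → X ∈ free → Y ∈ free
  hom_vanish : ∀ {T F : ModuleCat.{u} R}, T ∈ tors → F ∈ free → ∀ f : T ⟶ F, f = 0
  exists_ses : ∀ X : ModuleCat.{u} R, ∃ (A B : ModuleCat.{u} R) (i : A ⟶ X) (p : X ⟶ B)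
    (w : i ≫ p = 0), A ∈ tors ∧ B ∈ free ∧ (ShortComplex.mk i p w).ShortExact

/-- A nonzero module is almost torsion-free if every proper submodule is torsion-free
(ATF1) and every short exact sequence `0 → A → B → T₀ → 0` with `B` torsion has `A`
torsion (ATF2). -/
def AlmostTorsionFree (tors free : Set (ModuleCat.{u} R)) (T₀ : ModuleCat.{u} R) : Prop :=
  Nontrivial T₀ ∧
  (∀ N : Submodule R T₀, N ≠ ⊤ → ModuleCat.of R N ∈ free) ∧
  (∀ (A B : ModuleCat.{u} R) (i : A ⟶ B) (p : B ⟶ T₀) (w : i ≫ p = 0),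
    (ShortComplex.mk i p w).ShortExact → B ∈ tors → A ∈ tors)

/-- A nonzero module is almost torsion if every proper quotient is torsion (AT1) and
every short exact sequence `0 → F₀ → A → B → 0` with `A` torsion-free has `B`
torsion-free (AT2). -/
def AlmostTorsion (tors free : Set (ModuleCat.{u} R)) (F₀ : ModuleCat.{u} R) : Prop :=
  Nontrivial F₀ ∧
  (∀ N : Submodule R F₀, N ≠ ⊥ → ModuleCat.of R (F₀ ⧸ N) ∈ tors) ∧
  (∀ (A B : ModuleCat.{u} R) (i : F₀ ⟶ A) (p : A ⟶ B) (w : i ≫ p = 0),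
    (ShortComplex.mk i p w).ShortExact → A ∈ free → B ∈ free)

/-- In a torsion pair, a module that is both torsion and torsion-free is trivial. -/
lemma subsingleton_of_tors_free (τ : TorsionPair R) {X : ModuleCat.{u} R}
    (hT : X ∈ τ.tors) (hF : X ∈ τ.free) : Subsingleton X := by
  have h := τ.hom_vanish hT hF (𝟙 X)
  constructor
  intro a b
  have ha := congrArg (fun φ : X ⟶ X => φ a) h
  have hb := congrArg (fun φ : X ⟶ X => φ b) h
  simp only [ModuleCat.id_apply] at ha hb
  exact ha.trans hb.symm

lemma part1 (τ : TorsionPair R) (T₀ T₀' : ModuleCat.{u} R) (hT : T₀ ∈ τ.tors)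
    (hATF : AlmostTorsionFree τ.tors τ.free T₀)
    (hT' : T₀' ∈ τ.tors) (hATF' : AlmostTorsionFree τ.tors τ.free T₀')
    (g : T₀ ⟶ T₀') (hg : g ≠ 0) : IsIso g := by
  obtain ⟨_, hATF1, hATF2⟩ := hATF
  obtain ⟨_, hATF1', hATF2'⟩ := hATF'
  -- g is surjective
  have hsurj : Function.Surjective g := by
    by_contra hns
    have hrange : LinearMap.range g.hom ≠ ⊤ := by
      intro h
      exact hns (LinearMap.range_eq_top.1 h)
    have hfree : ModuleCat.of R (LinearMap.range g.hom) ∈ τ.free :=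
      hATF1' _ hrange
    have h0 := τ.hom_vanish hT hfree
      (ModuleCat.ofHom (g.hom.rangeRestrict))
    apply hg
    ext x
    have h1 : ModuleCat.ofHom (g.hom.rangeRestrict) x = 0 := by
      rw [h0]; rfl
    have h2 : g x = Subtype.val (ModuleCat.ofHom (g.hom.rangeRestrict) x) := rfl
    rw [h2, h1]
    rfl
  -- kernel
  set K := LinearMap.ker g.hom with hK
  have hKtop : K ≠ ⊤ := by
    intro h
    apply hg
    ext x
    have : x ∈ K := h ▸ Submodule.mem_top
    simpa [hK] using this
  -- short exact sequence 0 → K → T₀ → T₀' → 0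
  have w : ModuleCat.ofHom K.subtype ≫ g = 0 := by
    ext ⟨x, hx⟩
    simpa [hK] using hx
  have hSE : (ShortComplex.mk (ModuleCat.ofHom K.subtype) g w).ShortExact := by
    apply ShortComplex.ShortExact.mk'
    · rw [ShortComplex.moduleCat_exact_iff]
      intro x hx
      exact ⟨⟨x, hx⟩, rfl⟩
    · rw [ModuleCat.mono_iff_injective]
      exact Subtype.val_injective
    · rw [ModuleCat.epi_iff_surjective]
      exact hsurj
  have hKtors : ModuleCat.of R K ∈ τ.tors :=
    hATF2' _ _ (ModuleCat.ofHom K.subtype) g w hSE hT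
  have hKfree : ModuleCat.of R K ∈ τ.free := hATF1 _ hKtop
  have hKsub : Subsingleton (ModuleCat.of R K) := subsingleton_of_tors_free τ hKtors hKfree
  have hinj : Function.Injective g := by
    rw [← LinearMap.ker_eq_bot (f := g.hom)]
    rw [Submodule.eq_bot_iff]
    intro x hx
    exact congrArg Subtype.val
      (@Subsingleton.elim (ModuleCat.of R K) hKsub ⟨x, hx⟩ 0)
  have : Mono g := (ModuleCat.mono_iff_injective g).2 hinj
  have : Epi g := (ModuleCat.epi_iff_surjective g).2 hsurj
  exact isIso_of_mono_of_epi g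

lemma part2 (τ : TorsionPair R) (F₀ F₀' : ModuleCat.{u} R) (hF : F₀ ∈ τ.free)
    (hAT : AlmostTorsion τ.tors τ.free F₀)
    (hF' : F₀' ∈ τ.free) (hAT' : AlmostTorsion τ.tors τ.free F₀')
    (f : F₀ ⟶ F₀') (hf : f ≠ 0) : IsIso f := by
  obtain ⟨_, hAT1, hAT2⟩ := hAT
  obtain ⟨_, hAT1', hAT2'⟩ := hAT'
  -- f is injective
  have hinj : Function.Injective f := by
    by_contra hni
    rw [← LinearMap.ker_eq_bot (f := f.hom)] at hni
    set K := LinearMap.ker f.hom with hK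
    have htors : ModuleCat.of R (F₀ ⧸ K) ∈ τ.tors := hAT1 K hni
    have h0 := τ.hom_vanish htors hF'
      (ModuleCat.ofHom (K.liftQ f.hom le_rfl))
    apply hf
    ext x
    have := congrArg (fun φ : ModuleCat.of R (F₀ ⧸ K) ⟶ F₀' => φ (K.mkQ x)) h0
    simpa using this
  -- f is surjective
  have hsurj : Function.Surjective f := by
    set N := LinearMap.range f.hom with hN
    have hNbot : N ≠ ⊥ := by
      intro h
      apply hf
      ext x
      have : f x ∈ N := LinearMap.mem_range_self f.hom x
      rw [h] at this
      simpa using this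
    have htors : ModuleCat.of R (F₀' ⧸ N) ∈ τ.tors := hAT1' N hNbot
    have w : f ≫ ModuleCat.ofHom N.mkQ = 0 := by
      ext x
      have hx : f x ∈ N := ⟨x, rfl⟩
      show N.mkQ (f x) = 0
      rw [Submodule.mkQ_apply, Submodule.Quotient.mk_eq_zero]
      exact hx
    have hSE : (ShortComplex.mk f (ModuleCat.ofHom N.mkQ) w).ShortExact := by
      apply ShortComplex.ShortExact.mk'
      · rw [ShortComplex.moduleCat_exact_iff]
        intro x hx
        exact (Submodule.Quotient.mk_eq_zero N).1 hx
      · rw [ModuleCat.mono_iff_injective]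
        exact hinj
      · rw [ModuleCat.epi_iff_surjective]
        exact Submodule.mkQ_surjective N
    have hfree : ModuleCat.of R (F₀' ⧸ N) ∈ τ.free :=
      hAT2 _ _ f (ModuleCat.ofHom N.mkQ) w hSE hF'
    have hsub : Subsingleton (ModuleCat.of R (F₀' ⧸ N)) :=
      subsingleton_of_tors_free τ htors hfree
    intro x
    have hx : x ∈ N := by
      rw [← Submodule.Quotient.mk_eq_zero]
      exact @Subsingleton.elim (ModuleCat.of R (F₀' ⧸ N)) hsub _ _
    exact hx
  have : Mono f := (ModuleCat.mono_iff_injective f).2 hinj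
  have : Epi f := (ModuleCat.epi_iff_surjective f).2 hsurj
  exact isIso_of_mono_of_epi f

theorem almost_torsion_modules_are_bricks (τ : TorsionPair R) :
    (∀ (T₀ T₀' : ModuleCat.{u} R), T₀ ∈ τ.tors → AlmostTorsionFree τ.tors τ.free T₀ →
      T₀' ∈ τ.tors → AlmostTorsionFree τ.tors τ.free T₀' →
      ∀ g : T₀ ⟶ T₀', g ≠ 0 → IsIso g) ∧
    (∀ (F₀ F₀' : ModuleCat.{u} R), F₀ ∈ τ.free → AlmostTorsion τ.tors τ.free F₀ →
      F₀' ∈ τ.free → AlmostTorsion τ.tors τ.free F₀' →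
      ∀ f : F₀ ⟶ F₀', f ≠ 0 → IsIso f) ∧
    (∀ T₀ : ModuleCat.{u} R, T₀ ∈ τ.tors → AlmostTorsionFree τ.tors τ.free T₀ →
      ∀ f : T₀ ⟶ T₀, f ≠ 0 → IsIso f) ∧
    (∀ F₀ : ModuleCat.{u} R, F₀ ∈ τ.free → AlmostTorsion τ.tors τ.free F₀ →
      ∀ f : F₀ ⟶ F₀, f ≠ 0 → IsIso f) := by
  refine ⟨part1 τ, part2 τ, fun T₀ h1 h2 => part1 τ T₀ T₀ h1 h2 h1 h2,
    fun F₀ h1 h2 => part2 τ F₀ F₀ h1 h2 h1 h2⟩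

end Paper
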